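/- Every 3-anti-traceable oriented graph of order at least 3 is anti-traceable (i.e., f(3) = 3). -/

import Mathlib

variable {V : Type*}

/-- An oriented graph: no 2-cycles (and hence no loops). -/
def Oriented (A : V → V → Prop) : Prop := ∀ u v, A u v → ¬ A v u

/-- `AltPath A b l` : the consecutive vertices of `l` are joined by arcs whose
directions alternate, the first arc being forward iff `b = true`. -/
def AltPath (A : V → V → Prop) : Bool → List V → Prop
  | _, [] => True
  | _, [_] => True
  | b, x :: y :: rest => (if b then A x y else A y x) ∧ AltPath A (!b) (y :: rest)

/-- An anti-directed path: distinct vertices with alternating arcs. -/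
def IsAntiPath (A : V → V → Prop) (l : List V) : Prop :=
  l.Nodup ∧ ∃ b : Bool, AltPath A b l

/-- The induced subdigraph on the vertex set `S` has a hamiltonian anti-directed path. -/
def AntiTraceableOn [DecidableEq V] (A : V → V → Prop) (S : Finset V) : Prop :=
  ∃ l : List V, l.Nodup ∧ l.toFinset = S ∧ ∃ b : Bool, AltPath A b l

/-- The digraph has a hamiltonian anti-directed path. -/
def AntiTraceable [Fintype V] [DecidableEq V] (A : V → V → Prop) : Prop :=
  AntiTraceableOn A Finset.univ

/-- `k`-anti-traceable: order at least `k` and every induced subdigraph on `k`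
vertices has a hamiltonian anti-directed path. -/
def KAntiTraceable [Fintype V] [DecidableEq V] (k : ℕ) (A : V → V → Prop) : Prop :=
  k ≤ Fintype.card V ∧ ∀ S : Finset V, S.card = k → AntiTraceableOn A S

/-- An anti-directed cycle: a cyclic sequence of distinct vertices, of even
length at least 4, in which even-indexed vertices are sources and odd-indexed
vertices are sinks of the two incident arcs. -/
def AltCycle (A : V → V → Prop) (l : List V) : Prop :=
  l.Nodup ∧ 4 ≤ l.length ∧ l.length % 2 = 0 ∧
  ∀ i : Fin l.length,
    if i.1 % 2 = 0 then
      A (l.get i) (l.get ⟨(i.1 + 1) % l.length, Nat.mod_lt _ (Nat.zero_lt_of_lt i.2)⟩)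
    else
      A (l.get ⟨(i.1 + 1) % l.length, Nat.mod_lt _ (Nat.zero_lt_of_lt i.2)⟩) (l.get i)

/-- The arcs among `{a,b,c}` form a subset of the arcs of a directed triangle. -/
def SubDirTriangle (A : V → V → Prop) (a b c : V) : Prop :=
  (¬ A b a ∧ ¬ A c b ∧ ¬ A a c) ∨ (¬ A a b ∧ ¬ A b c ∧ ¬ A c a)


section AuxAntiTrace

variable {A : V → V → Prop}

private lemma triple6 [DecidableEq V]
    (h3 : ∀ S : Finset V, S.card = 3 → AntiTraceableOn A S)
    (a b c : V) (hab : a ≠ b) (hac : a ≠ c) (hbc : b ≠ c) :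
    (A a b ∧ A c b) ∨ (A b a ∧ A b c) ∨ (A b a ∧ A c a) ∨
    (A a b ∧ A a c) ∨ (A a c ∧ A b c) ∨ (A c a ∧ A c b) := by
  obtain ⟨l, hnd, hfin, b', hp⟩ := h3 {a, b, c} (by
    rw [Finset.card_insert_of_notMem (by simp [hab, hac]),
      Finset.card_insert_of_notMem (by simp [hbc]), Finset.card_singleton])
  have hlen : l.length = 3 := by
    have h1 := List.toFinset_card_of_nodup hnd
    rw [hfin] at h1
    rw [Finset.card_insert_of_notMem (by simp [hab, hac]),
      Finset.card_insert_of_notMem (by simp [hbc]), Finset.card_singleton] at h1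
    omega
  rcases l with _ | ⟨x, _ | ⟨y, _ | ⟨z, rest⟩⟩⟩ <;> simp at hlen
  subst hlen
  have hx : x = a ∨ x = b ∨ x = c := by
    have : x ∈ ({a, b, c} : Finset V) := by rw [← hfin]; simp
    simpa using this
  have hy : y = a ∨ y = b ∨ y = c := by
    have : y ∈ ({a, b, c} : Finset V) := by rw [← hfin]; simp
    simpa using this
  have hz : z = a ∨ z = b ∨ z = c := by
    have : z ∈ ({a, b, c} : Finset V) := by rw [← hfin]; simp
    simpa using this
  simp only [List.nodup_cons, List.mem_cons, List.mem_singleton] at hnd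
  cases b' <;> simp only [AltPath, if_true, if_false, Bool.not_true, Bool.not_false,
    and_true] at hp <;>
    rcases hx with rfl | rfl | rfl <;> rcases hy with rfl | rfl | rfl <;>
    rcases hz with rfl | rfl | rfl <;> simp_all

private lemma my_trans [DecidableEq V]
    (hA : ∀ u v, A u v → ¬ A v u)
    (h3 : ∀ S : Finset V, S.card = 3 → AntiTraceableOn A S)
    {a b c : V} (h1 : A a b) (h2 : A b c) : A a c := by
  have hab : a ≠ b := by rintro rfl; exact hA a a h1 h1
  have hbc : b ≠ c := by rintro rfl; exact hA b b h2 h2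
  have hac : a ≠ c := by rintro rfl; exact hA a b h1 h2
  rcases triple6 h3 a b c hab hac hbc with ⟨_, h⟩ | ⟨h, _⟩ | ⟨h, _⟩ | ⟨_, h⟩ | ⟨h, _⟩ | ⟨_, h⟩
  · exact absurd h (hA b c h2)
  · exact absurd h (hA a b h1)
  · exact absurd h (hA a b h1)
  · exact h
  · exact h
  · exact absurd h (hA b c h2)

private lemma exists_src (htr : ∀ {a b c : V}, A a b → A b c → A a c)
    (hirr : ∀ v : V, ¬ A v v) (S : Finset V) (hS : S.Nonempty) :
    ∃ u ∈ S, ∀ v ∈ S, ¬ A v u := by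
  classical
  obtain ⟨u, huS, hmin⟩ := S.exists_min_image
    (fun u => (S.filter (fun v => A v u)).card) hS
  refine ⟨u, huS, fun v hv hvu => ?_⟩
  have hsub : S.filter (fun w => A w v) ⊂ S.filter (fun w => A w u) := by
    constructor
    · intro w hw
      simp only [Finset.mem_filter] at *
      exact ⟨hw.1, htr hw.2 hvu⟩
    · intro hcon
      have hv' := hcon (Finset.mem_filter.2 ⟨hv, hvu⟩)
      simp only [Finset.mem_filter] at hv'
      exact hirr v hv'.2
  have h1 := Finset.card_lt_card hsub
  have h2 := hmin v hv
  omega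

private lemma exists_sorted [DecidableEq V]
    (htr : ∀ {a b c : V}, A a b → A b c → A a c)
    (hirr : ∀ v : V, ¬ A v v) (S : Finset V) :
    ∃ l : List V, l.Nodup ∧ l.toFinset = S ∧ l.Pairwise (fun u v => ¬ A v u) := by
  induction S using Finset.strongInduction with
  | _ S ih =>
    rcases S.eq_empty_or_nonempty with rfl | hne
    · exact ⟨[], by simp⟩
    · obtain ⟨u, huS, hu⟩ := exists_src (A := A) @htr hirr S hne
      obtain ⟨l, hnd, hfin, hpw⟩ := ih (S.erase u) (Finset.erase_ssubset huS)
      refine ⟨u :: l, ?_, ?_, ?_⟩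
      · refine List.nodup_cons.2 ⟨fun h => ?_, hnd⟩
        have : u ∈ S.erase u := by rw [← hfin]; exact List.mem_toFinset.2 h
        simp at this
      · rw [List.toFinset_cons, hfin, Finset.insert_erase huS]
      · refine List.pairwise_cons.2 ⟨fun v hv => ?_, hpw⟩
        apply hu
        have : v ∈ S.erase u := by rw [← hfin]; exact List.mem_toFinset.2 hv
        exact Finset.mem_of_mem_erase this

private lemma spaced [DecidableEq V]
    (h3 : ∀ S : Finset V, S.card = 3 → AntiTraceableOn A S)
    (l : List V) (hnd : l.Nodup)
    (hpw : l.Pairwise fun u v => ¬ A v u) (d : V) :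
    ∀ i j, i + 2 ≤ j → j < l.length → A (l.getD i d) (l.getD j d) := by
  intro i j hij hj
  have hi : i < l.length := by omega
  have hi1 : i + 1 < l.length := by omega
  rw [List.getD_eq_getElem l d hi, List.getD_eq_getElem l d hj]
  have hinj := List.nodup_iff_injective_get.1 hnd
  have hpw' := List.pairwise_iff_get.1 hpw
  set a := l[i] with ha
  set b := l[i + 1] with hb
  set c := l[j] with hc
  have hab : a ≠ b := fun h => by have := hinj h; simp at this
  have hac : a ≠ c := fun h => by have := hinj h; simp at this; omega
  have hbc : b ≠ c := fun h => by have := hinj h; simp at this; omega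
  have p1 : ¬ A b a := hpw' ⟨i, hi⟩ ⟨i + 1, hi1⟩ (by simp)
  have p2 : ¬ A c a := hpw' ⟨i, hi⟩ ⟨j, hj⟩ (by simp; omega)
  have p3 : ¬ A c b := hpw' ⟨i + 1, hi1⟩ ⟨j, hj⟩ (by simp; omega)
  rcases triple6 h3 a b c hab hac hbc with ⟨_, h⟩ | ⟨h, _⟩ | ⟨h, _⟩ | ⟨_, h⟩ | ⟨h, _⟩ | ⟨h, _⟩
  · exact absurd h p3
  · exact absurd h p1
  · exact absurd h p1
  · exact h
  · exact h
  · exact absurd h p2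

private lemma zigAlt (A : V → V → Prop) (f : ℕ → V) :
    ∀ (k s : ℕ),
      (∀ i, s ≤ i → i + 1 < s + k →
        if i % 2 = 0 then A (f (i + 1)) (f i) else A (f i) (f (i + 1))) →
      AltPath A (decide (s % 2 = 1)) ((List.range' s k).map f) := by
  intro k
  induction k with
  | zero => intro s _; simp [AltPath]
  | succ k ih =>
    intro s harc
    rw [List.range'_succ]
    cases k with
    | zero => simp [AltPath]
    | succ k' =>
      rw [List.range'_succ]
      have tail := ih (s + 1) (fun i h1 h2 => harc i (by omega) (by omega))
      rw [List.range'_succ] at tail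
      have harc0 := harc s (le_refl s) (by omega)
      have hpar : (!decide (s % 2 = 1)) = decide ((s + 1) % 2 = 1) := by
        rcases Nat.mod_two_eq_zero_or_one s with h | h <;> simp [h, Nat.add_mod]
      constructor
      · rcases Nat.mod_two_eq_zero_or_one s with h | h <;>
          simp [h] at harc0 ⊢ <;> exact harc0
      · rw [hpar]; exact tail

end AuxAntiTrace

theorem stmt6 [Fintype V] [DecidableEq V] (A : V → V → Prop)
    (hA : Oriented A) (hcard : 3 ≤ Fintype.card V)
    (h3 : KAntiTraceable 3 A) : AntiTraceable A := by
  obtain ⟨_, h3⟩ := h3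
  set n := Fintype.card V with hn
  rcases eq_or_lt_of_le hcard with h3n | h4n
  · exact h3 Finset.univ (by rw [Finset.card_univ]; omega)
  · obtain ⟨l, hnd, hfin, hpw⟩ := exists_sorted (A := A)
      (fun {a b c} => my_trans hA h3) (fun v h => hA v v h h) Finset.univ
    have hlen : l.length = n := by
      have h1 := List.toFinset_card_of_nodup hnd
      rw [hfin, Finset.card_univ] at h1
      omega
    set m := n / 2 with hm
    have hm2 : 2 ≤ m := by omega
    have hnev : Nonempty V := Fintype.card_pos_iff.1 (by omega)
    obtain ⟨d⟩ := hnev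
    set f : ℕ → V := fun k => l.getD (if k % 2 = 0 then m + k / 2 else k / 2) d with hf
    have hidx : ∀ k, k < n → (if k % 2 = 0 then m + k / 2 else k / 2) < n := by
      intro k hk
      rcases Nat.mod_two_eq_zero_or_one k with h | h <;> simp [h] <;> omega
    refine ⟨(List.range' 0 n).map f, ?_, ?_, false, ?_⟩
    · refine List.Nodup.map_on ?_ (List.nodup_range' (s := 0) (n := n))
      intro x hx y hy hxy
      simp only [List.mem_range'_1] at hx hy
      have hxn : x < n := by omega
      have hyn : y < n := by omega
      rw [hf] at hxy
      simp only at hxy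
      rw [List.getD_eq_getElem l d (by rw [hlen]; exact hidx x hxn),
        List.getD_eq_getElem l d (by rw [hlen]; exact hidx y hyn)] at hxy
      have := (List.Nodup.getElem_inj_iff hnd).1 hxy
      rcases Nat.mod_two_eq_zero_or_one x with h1 | h1 <;>
        rcases Nat.mod_two_eq_zero_or_one y with h2 | h2 <;>
        simp [h1, h2] at this <;> omega
    · apply Finset.eq_univ_of_card
      rw [List.toFinset_card_of_nodup, List.length_map, List.length_range']
      refine List.Nodup.map_on ?_ (List.nodup_range' (s := 0) (n := n))
      intro x hx y hy hxy
      simp only [List.mem_range'_1] at hx hy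
      have hxn : x < n := by omega
      have hyn : y < n := by omega
      rw [hf] at hxy
      simp only at hxy
      rw [List.getD_eq_getElem l d (by rw [hlen]; exact hidx x hxn),
        List.getD_eq_getElem l d (by rw [hlen]; exact hidx y hyn)] at hxy
      have := (List.Nodup.getElem_inj_iff hnd).1 hxy
      rcases Nat.mod_two_eq_zero_or_one x with h1 | h1 <;>
        rcases Nat.mod_two_eq_zero_or_one y with h2 | h2 <;>
        simp [h1, h2] at this <;> omega
    · have key := zigAlt A f n 0 ?_
      · exact key
      · intro i _ hi1
        simp only [Nat.zero_add] at hi1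
        have hsp := spaced h3 l hnd hpw d
        rcases Nat.mod_two_eq_zero_or_one i with h | h
        · have e1 : (if (i + 1) % 2 = 0 then m + (i + 1) / 2 else (i + 1) / 2) = i / 2 := by
            rw [if_neg (by omega : ¬ (i + 1) % 2 = 0)]; omega
          have e2 : (if i % 2 = 0 then m + i / 2 else i / 2) = m + i / 2 := if_pos h
          rw [if_pos h, hf]
          simp only
          rw [e1, e2]
          apply hsp
          · omega
          · rw [hlen]; omega
        · have e1 : (if i % 2 = 0 then m + i / 2 else i / 2) = i / 2 := by
            rw [if_neg (by omega : ¬ i % 2 = 0)]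
          have e2 : (if (i + 1) % 2 = 0 then m + (i + 1) / 2 else (i + 1) / 2)
              = m + (i + 1) / 2 := if_pos (by omega)
          rw [if_neg (by omega : ¬ i % 2 = 0), hf]
          simp only
          rw [e1, e2]
          apply hsp
          · omega
          · rw [hlen]; omega
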